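/- Let k and n be integers with n ≥ k ≥ 1, and let m be a real number with 1 ≤ m ≤ √k. Let A be a k × n 0-1 matrix with at least m·n·√k 1-entries. Then the number of occurrences of S in A is at least n²·(m² − 1)²/4 − m³·n·√k. -/

import Mathlib

/-- The number of 1-entries of a `k × n` 0-1 matrix (represented as a
Boolean-valued matrix). -/
def entriesCount {k n : ℕ} (A : Fin k → Fin n → Bool) : ℕ :=
  (Finset.univ.filter (fun p : Fin k × Fin n => A p.1 p.2 = true)).card

/-- The number of occurrences of the all-ones `2 × 2` matrix `S` in `A`:
the number of pairs of distinct rows together with pairs of distinct columns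
such that all four intersection entries are 1. -/
def occS {k n : ℕ} (A : Fin k → Fin n → Bool) : ℕ :=
  (Finset.univ.filter (fun q : (Fin k × Fin k) × Fin n × Fin n =>
    q.1.1 < q.1.2 ∧ q.2.1 < q.2.2 ∧
    A q.1.1 q.2.1 = true ∧ A q.1.1 q.2.2 = true ∧
    A q.1.2 q.2.1 = true ∧ A q.1.2 q.2.2 = true)).card

namespace Stmt7Aux
open Finset

variable {k n : ℕ} (A : Fin k → Fin n → Bool)

/-- degree of a row -/
def rowdeg (r : Fin k) : ℕ := (univ.filter (fun c => A r c = true)).card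

/-- number of rows having a 1 in both given columns -/
def tpair (p : Fin n × Fin n) : ℕ :=
  (univ.filter (fun r => A r p.1 = true ∧ A r p.2 = true)).card

/-- occurrences counted with ordered (distinct) rows and columns -/
def occ4 : ℕ :=
  (univ.filter (fun q : (Fin k × Fin k) × Fin n × Fin n =>
    q.2.1 ≠ q.2.2 ∧ q.1.1 ≠ q.1.2 ∧
    A q.1.1 q.2.1 = true ∧ A q.1.1 q.2.2 = true ∧
    A q.1.2 q.2.1 = true ∧ A q.1.2 q.2.2 = true)).card

lemma ec_eq : entriesCount A = ∑ r, rowdeg A r := by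
  simp only [entriesCount, rowdeg, Finset.card_filter, Fintype.sum_prod_type]

lemma sum_t_off :
    ∑ p ∈ (univ : Finset (Fin n)).offDiag, tpair A p + entriesCount A
      = ∑ r, rowdeg A r * rowdeg A r := by
  have h1 : ∑ p ∈ (univ : Finset (Fin n)).offDiag, tpair A p
      = ∑ r, ((univ : Finset (Fin n)).offDiag.filter
            (fun p => A r p.1 = true ∧ A r p.2 = true)).card := by
    simp only [tpair, Finset.card_filter]
    rw [Finset.sum_comm]
  have h2 : ∀ r : Fin k, ((univ : Finset (Fin n)).offDiag.filter
      (fun p => A r p.1 = true ∧ A r p.2 = true)).card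
      = rowdeg A r * rowdeg A r - rowdeg A r := by
    intro r
    rw [show ((univ : Finset (Fin n)).offDiag.filter
        (fun p => A r p.1 = true ∧ A r p.2 = true))
        = (univ.filter (fun c => A r c = true)).offDiag by
      ext p; simp [Finset.mem_offDiag]; tauto]
    rw [Finset.offDiag_card]; rfl
  have h3 : ∀ r : Fin k, rowdeg A r ≤ rowdeg A r * rowdeg A r := by
    intro r
    rcases Nat.eq_zero_or_pos (rowdeg A r) with h | h
    · simp [h]
    · exact Nat.le_mul_of_pos_left _ h
  rw [h1, ec_eq]
  simp only [h2]
  rw [← Finset.sum_add_distrib]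
  exact Finset.sum_congr rfl fun r _ => Nat.sub_add_cancel (h3 r)

lemma occ4_eq :
    occ4 A + ∑ p ∈ (univ : Finset (Fin n)).offDiag, tpair A p
      = ∑ p ∈ (univ : Finset (Fin n)).offDiag, tpair A p * tpair A p := by
  have h1 : occ4 A = ∑ p ∈ (univ : Finset (Fin n)).offDiag,
      ((univ : Finset (Fin k)).filter
        (fun r => A r p.1 = true ∧ A r p.2 = true)).offDiag.card := by
    rw [occ4, Finset.card_eq_sum_card_fiberwise
      (f := fun q : (Fin k × Fin k) × Fin n × Fin n => q.2)
      (t := (univ : Finset (Fin n)).offDiag)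
      (fun q hq => by simp only [Finset.mem_coe, Finset.mem_filter] at hq
                      simp [Finset.mem_offDiag, hq.2.1])]
    apply Finset.sum_congr rfl
    intro p hp
    rw [Finset.mem_offDiag] at hp
    rw [show ((Finset.univ.filter (fun q : (Fin k × Fin k) × Fin n × Fin n =>
        q.2.1 ≠ q.2.2 ∧ q.1.1 ≠ q.1.2 ∧
        A q.1.1 q.2.1 = true ∧ A q.1.1 q.2.2 = true ∧
        A q.1.2 q.2.1 = true ∧ A q.1.2 q.2.2 = true)).filter (fun q => q.2 = p))
        = ((univ : Finset (Fin k)).filter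
            (fun r => A r p.1 = true ∧ A r p.2 = true)).offDiag ×ˢ {p} by
      ext q
      simp [Finset.mem_offDiag, Prod.ext_iff]
      aesop]
    simp
  have h2 : ∀ p : Fin n × Fin n,
      ((univ : Finset (Fin k)).filter
        (fun r => A r p.1 = true ∧ A r p.2 = true)).offDiag.card
      = tpair A p * tpair A p - tpair A p := by
    intro p; rw [Finset.offDiag_card]; rfl
  have h3 : ∀ p : Fin n × Fin n, tpair A p ≤ tpair A p * tpair A p := by
    intro p
    rcases Nat.eq_zero_or_pos (tpair A p) with h | h
    · simp [h]
    · exact Nat.le_mul_of_pos_left _ h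
  rw [h1]
  simp only [h2]
  rw [← Finset.sum_add_distrib]
  exact Finset.sum_congr rfl fun p _ => Nat.sub_add_cancel (h3 p)

lemma stepA :
    (univ.filter (fun q : (Fin k × Fin k) × Fin n × Fin n =>
      q.2.1 ≠ q.2.2 ∧ q.1.1 < q.1.2 ∧
      A q.1.1 q.2.1 = true ∧ A q.1.1 q.2.2 = true ∧
      A q.1.2 q.2.1 = true ∧ A q.1.2 q.2.2 = true)).card = 2 * occS A := by
  have hsplit : (univ.filter (fun q : (Fin k × Fin k) × Fin n × Fin n =>
      q.2.1 ≠ q.2.2 ∧ q.1.1 < q.1.2 ∧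
      A q.1.1 q.2.1 = true ∧ A q.1.1 q.2.2 = true ∧
      A q.1.2 q.2.1 = true ∧ A q.1.2 q.2.2 = true))
      = (univ.filter (fun q : (Fin k × Fin k) × Fin n × Fin n =>
          q.1.1 < q.1.2 ∧ q.2.1 < q.2.2 ∧
          A q.1.1 q.2.1 = true ∧ A q.1.1 q.2.2 = true ∧
          A q.1.2 q.2.1 = true ∧ A q.1.2 q.2.2 = true))
        ∪ (univ.filter (fun q : (Fin k × Fin k) × Fin n × Fin n =>
          q.1.1 < q.1.2 ∧ q.2.2 < q.2.1 ∧
          A q.1.1 q.2.1 = true ∧ A q.1.1 q.2.2 = true ∧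
          A q.1.2 q.2.1 = true ∧ A q.1.2 q.2.2 = true)) := by
    ext q
    simp only [Finset.mem_union, Finset.mem_filter, Finset.mem_univ, true_and]
    constructor
    · rintro ⟨hne, h⟩
      rcases lt_or_gt_of_ne hne with h' | h'
      · exact Or.inl ⟨h.1, h', h.2⟩
      · exact Or.inr ⟨h.1, h', h.2⟩
    · rintro (⟨h1, h2, h⟩ | ⟨h1, h2, h⟩)
      · exact ⟨ne_of_lt h2, h1, h⟩
      · exact ⟨ne_of_gt h2, h1, h⟩
  rw [hsplit, Finset.card_union_of_disjoint, two_mul, occS]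
  · congr 1
    refine Finset.card_bij' (fun q _ => (q.1, q.2.swap)) (fun q _ => (q.1, q.2.swap))
      ?_ ?_ ?_ ?_ <;>
      · intro q hq
        simp only [Finset.mem_filter, Finset.mem_univ, true_and, Prod.fst_swap,
          Prod.snd_swap, Prod.swap_swap, Prod.mk.injEq] at hq ⊢ <;> tauto
  · rw [Finset.disjoint_filter]
    rintro q _ ⟨_, h2, _⟩ ⟨_, h2', _⟩
    exact absurd (h2.trans h2') (lt_irrefl _)

lemma occ4_four : occ4 A = 4 * occS A := by
  have hsplit : (univ.filter (fun q : (Fin k × Fin k) × Fin n × Fin n =>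
      q.2.1 ≠ q.2.2 ∧ q.1.1 ≠ q.1.2 ∧
      A q.1.1 q.2.1 = true ∧ A q.1.1 q.2.2 = true ∧
      A q.1.2 q.2.1 = true ∧ A q.1.2 q.2.2 = true))
      = (univ.filter (fun q : (Fin k × Fin k) × Fin n × Fin n =>
          q.2.1 ≠ q.2.2 ∧ q.1.1 < q.1.2 ∧
          A q.1.1 q.2.1 = true ∧ A q.1.1 q.2.2 = true ∧
          A q.1.2 q.2.1 = true ∧ A q.1.2 q.2.2 = true))
        ∪ (univ.filter (fun q : (Fin k × Fin k) × Fin n × Fin n =>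
          q.2.1 ≠ q.2.2 ∧ q.1.2 < q.1.1 ∧
          A q.1.1 q.2.1 = true ∧ A q.1.1 q.2.2 = true ∧
          A q.1.2 q.2.1 = true ∧ A q.1.2 q.2.2 = true)) := by
    ext q
    simp only [Finset.mem_union, Finset.mem_filter, Finset.mem_univ, true_and]
    constructor
    · rintro ⟨hc, hr, h⟩
      rcases lt_or_gt_of_ne hr with h' | h'
      · exact Or.inl ⟨hc, h', h⟩
      · exact Or.inr ⟨hc, h', h⟩
    · rintro (⟨h1, h2, h⟩ | ⟨h1, h2, h⟩)
      · exact ⟨h1, ne_of_lt h2, h⟩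
      · exact ⟨h1, ne_of_gt h2, h⟩
  have hswap : (univ.filter (fun q : (Fin k × Fin k) × Fin n × Fin n =>
      q.2.1 ≠ q.2.2 ∧ q.1.2 < q.1.1 ∧
      A q.1.1 q.2.1 = true ∧ A q.1.1 q.2.2 = true ∧
      A q.1.2 q.2.1 = true ∧ A q.1.2 q.2.2 = true)).card
      = (univ.filter (fun q : (Fin k × Fin k) × Fin n × Fin n =>
      q.2.1 ≠ q.2.2 ∧ q.1.1 < q.1.2 ∧
      A q.1.1 q.2.1 = true ∧ A q.1.1 q.2.2 = true ∧
      A q.1.2 q.2.1 = true ∧ A q.1.2 q.2.2 = true)).card := by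
    refine Finset.card_bij' (fun q _ => (q.1.swap, q.2)) (fun q _ => (q.1.swap, q.2))
      ?_ ?_ ?_ ?_ <;>
      · intro q hq
        simp only [Finset.mem_filter, Finset.mem_univ, true_and, Prod.fst_swap,
          Prod.snd_swap, Prod.swap_swap, Prod.mk.injEq] at hq ⊢ <;> tauto
  rw [occ4, hsplit, Finset.card_union_of_disjoint, hswap, stepA]
  · ring
  · rw [Finset.disjoint_filter]
    rintro q _ ⟨_, h2, _⟩ ⟨_, h2', _⟩
    exact absurd (h2.trans h2') (lt_irrefl _)

end Stmt7Aux

open Finset Stmt7Aux in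

set_option maxHeartbeats 4000000 in
theorem stmt7 (k n : ℕ) (hk : 1 ≤ k) (hkn : k ≤ n) (m : ℝ)
    (hm1 : 1 ≤ m) (hm2 : m ≤ Real.sqrt k)
    (A : Fin k → Fin n → Bool)
    (hA : m * n * Real.sqrt k ≤ (entriesCount A : ℝ)) :
    (n : ℝ) ^ 2 * (m ^ 2 - 1) ^ 2 / 4 - m ^ 3 * n * Real.sqrt k ≤ (occS A : ℝ) := by
  classical
  set s : ℝ := Real.sqrt k with hs_def
  have hs0 : 0 ≤ s := Real.sqrt_nonneg _
  have hs2 : s ^ 2 = (k : ℝ) := Real.sq_sqrt (by positivity)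
  have hs1 : 1 ≤ s := le_trans hm1 hm2
  have hsn : s ^ 2 ≤ (n : ℝ) := by rw [hs2]; exact_mod_cast hkn
  have hn1 : (1 : ℝ) ≤ (n : ℝ) := by
    have : 1 ≤ n := le_trans hk hkn
    exact_mod_cast this
  have hm0 : (0 : ℝ) < m := lt_of_lt_of_le one_pos hm1
  have hocc0 : (0 : ℝ) ≤ (occS A : ℝ) := Nat.cast_nonneg _
  -- small n case
  by_cases hn4 : (n : ℝ) ≤ 4
  · have h1 : (m ^ 2 - 1) ^ 2 ≤ m ^ 3 * s := by
      nlinarith [sq_nonneg m, sq_nonneg (m - 1)]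
    have h2 : (n : ℝ) ^ 2 * (m ^ 2 - 1) ^ 2 ≤ 4 * (n : ℝ) * (m ^ 3 * s) := by
      have hms : 0 ≤ m ^ 3 * s := by positivity
      have hsq : (n : ℝ) ^ 2 ≤ 4 * n := by nlinarith
      have h3 : (n : ℝ) ^ 2 * (m ^ 2 - 1) ^ 2 ≤ (n : ℝ) ^ 2 * (m ^ 3 * s) :=
        mul_le_mul_of_nonneg_left h1 (by positivity)
      have h4 : (n : ℝ) ^ 2 * (m ^ 3 * s) ≤ 4 * n * (m ^ 3 * s) :=
        mul_le_mul_of_nonneg_right hsq hms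
      linarith
    nlinarith
  push_neg at hn4
  -- cast key combinatorial identities
  have key1 := sum_t_off A
  have key2 := occ4_eq A
  rw [occ4_four A] at key2
  have f1 : (∑ p ∈ (Finset.univ : Finset (Fin n)).offDiag, (tpair A p : ℝ))
      + (entriesCount A : ℝ) = ∑ r, (rowdeg A r : ℝ) ^ 2 := by
    have h := congrArg (Nat.cast (R := ℝ)) key1
    push_cast at h
    calc (∑ p ∈ (Finset.univ : Finset (Fin n)).offDiag, (tpair A p : ℝ))
          + (entriesCount A : ℝ)
        = ∑ r, (rowdeg A r : ℝ) * (rowdeg A r : ℝ) := h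
      _ = ∑ r, (rowdeg A r : ℝ) ^ 2 := by
          exact Finset.sum_congr rfl fun r _ => (pow_two _).symm
  have f2 : 4 * (occS A : ℝ) + (∑ p ∈ (Finset.univ : Finset (Fin n)).offDiag, (tpair A p : ℝ))
      = ∑ p ∈ (Finset.univ : Finset (Fin n)).offDiag, (tpair A p : ℝ) ^ 2 := by
    have h := congrArg (Nat.cast (R := ℝ)) key2
    push_cast at h
    calc 4 * (occS A : ℝ) + (∑ p ∈ (Finset.univ : Finset (Fin n)).offDiag, (tpair A p : ℝ))
        = ∑ p ∈ (Finset.univ : Finset (Fin n)).offDiag, (tpair A p : ℝ) * (tpair A p : ℝ) := h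
      _ = _ := Finset.sum_congr rfl fun p _ => (pow_two ((tpair A p : ℝ))).symm
  have hEsum : (entriesCount A : ℝ) = ∑ r, (rowdeg A r : ℝ) := by
    rw [ec_eq A]; push_cast; rfl
  -- Cauchy--Schwarz over rows
  have f3 : (entriesCount A : ℝ) ^ 2 ≤ (k : ℝ) * ∑ r, (rowdeg A r : ℝ) ^ 2 := by
    have h := sq_sum_le_card_mul_sum_sq (s := (Finset.univ : Finset (Fin k)))
      (f := fun r => (rowdeg A r : ℝ))
    rw [hEsum]
    simpa using h
  -- Cauchy--Schwarz over column pairs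
  have f4 : (∑ p ∈ (Finset.univ : Finset (Fin n)).offDiag, (tpair A p : ℝ)) ^ 2
      ≤ (n : ℝ) ^ 2 * ∑ p ∈ (Finset.univ : Finset (Fin n)).offDiag, (tpair A p : ℝ) ^ 2 := by
    have h := sq_sum_le_card_mul_sum_sq (s := (Finset.univ : Finset (Fin n)).offDiag)
      (f := fun p => (tpair A p : ℝ))
    have hcard : (((Finset.univ : Finset (Fin n)).offDiag.card : ℝ)) ≤ (n : ℝ) ^ 2 := by
      rw [Finset.offDiag_card]
      have hc : (Finset.univ : Finset (Fin n)).card = n := by simp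
      rw [hc]
      calc ((n * n - n : ℕ) : ℝ) ≤ ((n * n : ℕ) : ℝ) := by
            exact_mod_cast Nat.sub_le (n * n) n
        _ = (n : ℝ) ^ 2 := by push_cast; ring
    have hQ0 : 0 ≤ ∑ p ∈ (Finset.univ : Finset (Fin n)).offDiag, ((tpair A p : ℝ)) ^ 2 :=
      Finset.sum_nonneg fun p _ => sq_nonneg _
    exact le_trans h (mul_le_mul_of_nonneg_right hcard hQ0)
  -- abbreviate
  set E : ℝ := (entriesCount A : ℝ) with hE_def
  set T2 : ℝ := ∑ p ∈ (Finset.univ : Finset (Fin n)).offDiag, (tpair A p : ℝ) with hT2_def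
  set Q2 : ℝ := ∑ p ∈ (Finset.univ : Finset (Fin n)).offDiag, (tpair A p : ℝ) ^ 2 with hQ2_def
  set D2 : ℝ := ∑ r, (rowdeg A r : ℝ) ^ 2 with hD2_def
  have hk0 : (0 : ℝ) < (k : ℝ) := by exact_mod_cast hk
  have hT20 : 0 ≤ T2 := by
    rw [hT2_def]; exact Finset.sum_nonneg fun p _ => Nat.cast_nonneg _
  have hE0 : m * n * s ≤ E := hA
  have hn0' : (0 : ℝ) ≤ (n : ℝ) := by positivity
  have hkn' : (k : ℝ) ≤ (n : ℝ) := by exact_mod_cast hkn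
  have hmns_k : (k : ℝ) ≤ m * n * s := by
    nlinarith [mul_le_mul_of_nonneg_left hs1 hn0',
      mul_le_mul_of_nonneg_right hm1 (mul_nonneg hn0' hs0)]
  -- step 1 : T2 ≥ m²n² - mns
  have hT0 : m ^ 2 * n ^ 2 - m * n * s ≤ T2 := by
    have hED : (k : ℝ) * T2 = (k : ℝ) * D2 - (k : ℝ) * E := by
      rw [← f1]; ring
    have h1 : E ^ 2 - (k : ℝ) * E ≤ (k : ℝ) * T2 := by
      rw [hED]; nlinarith [f3]
    have h2 : (m * n * s) ^ 2 - (k : ℝ) * (m * n * s) ≤ E ^ 2 - (k : ℝ) * E := by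
      nlinarith [hE0, hmns_k]
    have h3 : (m * n * s) ^ 2 - (k : ℝ) * (m * n * s)
        = (k : ℝ) * (m ^ 2 * n ^ 2 - m * n * s) := by rw [← hs2]; ring
    rw [h3] at h2
    exact le_of_mul_le_mul_left (le_trans h2 h1) hk0
  -- step 2: monotone quadratic and conclusion
  have hkey : T2 ^ 2 - (n : ℝ) ^ 2 * T2 ≤ (n : ℝ) ^ 2 * (4 * (occS A : ℝ)) := by
    nlinarith [f4, f2]
  set T0 : ℝ := m ^ 2 * n ^ 2 - m * n * s with hT0_def
  have hT0half : (n : ℝ) ^ 2 / 2 ≤ T0 := by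
    have hsn2 : s ≤ (n : ℝ) / 2 := by nlinarith [hsn, hn4, hs0]
    have hsle : s ≤ (n : ℝ) := by nlinarith [hs1, hsn]
    have hterm : 0 ≤ (n : ℝ) * (m + 1) - s := by nlinarith [hsle, hm0, hn1]
    have h1 : (n : ℝ) * ((n : ℝ) - s) ≤ m * n * (m * n - s) := by
      nlinarith [mul_nonneg (mul_nonneg (sub_nonneg.2 hm1) hn0') hterm]
    rw [hT0_def]
    nlinarith [hsn2, hn1]
  have hmono : T0 ^ 2 - (n : ℝ) ^ 2 * T0 ≤ T2 ^ 2 - (n : ℝ) ^ 2 * T2 := by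
    nlinarith [hT0, hT0half, sq_nonneg (T2 - T0)]
  have hfinal : (n : ℝ) ^ 2 * ((n : ℝ) ^ 2 * (m ^ 2 - 1) ^ 2 - 4 * (m ^ 3 * n * s))
      ≤ T0 ^ 2 - (n : ℝ) ^ 2 * T0 := by
    have expand : T0 ^ 2 - (n : ℝ) ^ 2 * T0
        - (n : ℝ) ^ 2 * ((n : ℝ) ^ 2 * (m ^ 2 - 1) ^ 2 - 4 * (m ^ 3 * n * s))
        = (n : ℝ) ^ 2 * (2 * m ^ 3 * n * s + m ^ 2 * s ^ 2 + (m ^ 2 - 1) * n ^ 2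
            + m * n * s) := by rw [hT0_def]; ring
    have hpos : 0 ≤ (n : ℝ) ^ 2 * (2 * m ^ 3 * n * s + m ^ 2 * s ^ 2 + (m ^ 2 - 1) * n ^ 2
        + m * n * s) := by
      have hm2' : 0 ≤ m ^ 2 - 1 := by nlinarith
      have hn0 : (0 : ℝ) ≤ (n : ℝ) := by positivity
      positivity
    linarith
  have hn0 : (0 : ℝ) < (n : ℝ) ^ 2 := by positivity
  have hchain : (n : ℝ) ^ 2 * ((n : ℝ) ^ 2 * (m ^ 2 - 1) ^ 2 - 4 * (m ^ 3 * n * s))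
      ≤ (n : ℝ) ^ 2 * (4 * (occS A : ℝ)) := le_trans hfinal (le_trans hmono hkey)
  have h2 : (n : ℝ) ^ 2 * (m ^ 2 - 1) ^ 2 - 4 * (m ^ 3 * n * s) ≤ 4 * (occS A : ℝ) :=
    le_of_mul_le_mul_left hchain hn0
  linarith
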